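/- In the construction D above (k oriented copies of K_{2d+1}, one oriented K_{2d+3} with special vertex v0, and an arc from each vertex of each K_{2d+1} to v0), every bipartition V(D) = V1 ∪ V2 with v0 ∈ V1 satisfies e(V1,V2) ≤ k·d(d+1)/2 + (d+1)(d+2)/2. Therefore min{e(V1,V2), e(V2,V1)} ≤ (d/(2(2d+1)))·m + (d+1)²/(2d+1) for every bipartition, where m = k(d+1)(2d+1) + (d+1)(2d+3). -/

import Mathlib

open Finset

def arcs {V : Type*} [DecidableEq V] (A : V → V → Prop) [DecidableRel A]
    (X Y : Finset V) : ℕ :=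
  ((X ×ˢ Y).filter (fun p => A p.1 p.2)).card

def outdeg {V : Type*} [Fintype V] (A : V → V → Prop) [DecidableRel A] (v : V) : ℕ :=
  (Finset.univ.filter (fun w => A v w)).card

def indeg {V : Type*} [Fintype V] (A : V → V → Prop) [DecidableRel A] (v : V) : ℕ :=
  (Finset.univ.filter (fun w => A w v)).card

lemma card_filter_prod_eq_sum {α β : Type*} [DecidableEq α] [DecidableEq β]
    (X : Finset α) (Y : Finset β) (P : α → β → Prop) [∀ a b, Decidable (P a b)] :
    ((X ×ˢ Y).filter (fun p => P p.1 p.2)).card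
      = ∑ u ∈ X, (Y.filter (fun v => P u v)).card := by
  rw [Finset.card_eq_sum_card_fiberwise
    (f := Prod.fst) (t := X)
    (fun p hp => (Finset.mem_product.1 (Finset.mem_filter.1 hp).1).1)]
  refine Finset.sum_congr rfl fun u hu => ?_
  have : (((X ×ˢ Y).filter (fun p => P p.1 p.2)).filter (fun p => p.1 = u))
      = (Y.filter (fun v => P u v)).image (Prod.mk u) := by
    ext ⟨a, b⟩
    simp only [Finset.mem_filter, Finset.mem_product, Finset.mem_image, Prod.mk.injEq]
    constructor
    · rintro ⟨⟨⟨_, hb⟩, hP⟩, rfl⟩; exact ⟨b, ⟨hb, hP⟩, rfl, rfl⟩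
    · rintro ⟨v, ⟨hv, hP⟩, rfl, rfl⟩; exact ⟨⟨⟨hu, hv⟩, hP⟩, rfl⟩
  rw [this, Finset.card_image_of_injective _ (fun a b h => by simpa using h)]

/-- In a regular tournament with all outdegrees `r`, at most `r(r+1)/2` arcs cross
any bipartition in a given direction. -/
lemma tourney_bound {α : Type*} [Fintype α] [DecidableEq α] (r : ℕ)
    (B : α → α → Prop) [DecidableRel B]
    (hirr : ∀ u, ¬ B u u)
    (hasym : ∀ u v : α, u ≠ v → (B u v ↔ ¬ B v u))
    (hdeg : ∀ u, (Finset.univ.filter (fun v => B u v)).card = r)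
    (X : Finset α) :
    2 * ((X ×ˢ Xᶜ).filter (fun p => B p.1 p.2)).card ≤ r * (r + 1) := by
  have hsum : ((X ×ˢ X).filter (fun p => B p.1 p.2)).card
      + ((X ×ˢ Xᶜ).filter (fun p => B p.1 p.2)).card = X.card * r := by
    rw [card_filter_prod_eq_sum, card_filter_prod_eq_sum, ← Finset.sum_add_distrib]
    rw [Finset.sum_congr rfl (fun u _ => ?_), Finset.sum_const, smul_eq_mul]
    rw [← Finset.card_union_of_disjoint
        (Finset.disjoint_filter_filter (disjoint_compl_right)),
      ← Finset.filter_union, Finset.union_compl, hdeg u]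
  have hin : 2 * ((X ×ˢ X).filter (fun p => B p.1 p.2)).card + X.card = X.card * X.card := by
    have h1 : ((X ×ˢ X).filter (fun p => B p.1 p.2))
        = X.offDiag.filter (fun p => B p.1 p.2) := by
      ext ⟨a, b⟩
      simp only [Finset.mem_filter, Finset.mem_product, Finset.mem_offDiag]
      constructor
      · rintro ⟨⟨ha, hb⟩, hP⟩
        exact ⟨⟨ha, hb, fun h => hirr a (h ▸ hP)⟩, hP⟩
      · rintro ⟨⟨ha, hb, _⟩, hP⟩; exact ⟨⟨ha, hb⟩, hP⟩
    have h2 : (X.offDiag.filter (fun p => B p.2 p.1)).card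
        = (X.offDiag.filter (fun p => B p.1 p.2)).card := by
      apply Finset.card_nbij' (fun p => (p.2, p.1)) (fun p => (p.2, p.1))
      · rintro ⟨a, b⟩ h
        simp only [Finset.mem_coe, Finset.mem_filter, Finset.mem_offDiag] at *
        tauto
      · rintro ⟨a, b⟩ h
        simp only [Finset.mem_coe, Finset.mem_filter, Finset.mem_offDiag] at *
        tauto
      · intro a _; rfl
      · intro a _; rfl
    have h3 : X.offDiag.filter (fun p => B p.1 p.2)
        ∪ X.offDiag.filter (fun p => B p.2 p.1) = X.offDiag := by
      ext ⟨a, b⟩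
      simp only [Finset.mem_union, Finset.mem_filter, Finset.mem_offDiag]
      constructor
      · rintro (⟨h, _⟩ | ⟨h, _⟩) <;> exact h
      · rintro ⟨ha, hb, hne⟩
        rcases Classical.em (B a b) with h | h
        · exact Or.inl ⟨⟨ha, hb, hne⟩, h⟩
        · exact Or.inr ⟨⟨ha, hb, hne⟩, ((hasym b a (Ne.symm hne)).2 h)⟩
    have h4 : Disjoint (X.offDiag.filter (fun p => B p.1 p.2))
        (X.offDiag.filter (fun p => B p.2 p.1)) := by
      rw [Finset.disjoint_filter]
      rintro ⟨a, b⟩ hab h12 h21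
      rw [Finset.mem_offDiag] at hab
      exact ((hasym a b hab.2.2).1 h12) h21
    have h5 : X.offDiag.card + X.card = X.card * X.card := by
      rw [Finset.offDiag_card]
      have : X.card ≤ X.card * X.card := by
        rcases Nat.eq_zero_or_pos X.card with h | h
        · simp [h]
        · exact Nat.le_mul_of_pos_left X.card h
      omega
    have h6 := Finset.card_union_of_disjoint h4
    rw [h3, h2] at h6
    rw [h1]
    omega
  -- Now conclude via integer arithmetic
  have hcast : (2 : ℤ) * (((X ×ˢ Xᶜ).filter (fun p => B p.1 p.2)).card : ℤ)
      = 2 * (X.card : ℤ) * r - ((X.card : ℤ) * X.card - X.card) := by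
    have e1 := congrArg (fun n : ℕ => (n : ℤ)) hsum
    have e2 := congrArg (fun n : ℕ => (n : ℤ)) hin
    push_cast at e1 e2 ⊢
    linarith
  have key : (0 : ℤ) ≤ ((r : ℤ) - X.card) * ((r : ℤ) - X.card + 1) := by
    set n : ℤ := (r : ℤ) - X.card with hn
    rcases le_or_gt n 0 with h | h
    · rcases le_or_gt (n + 1) 0 with h' | h'
      · have := mul_nonneg (neg_nonneg.2 h) (neg_nonneg.2 h')
        rwa [neg_mul_neg] at this
      · have : n = 0 := by omega
        simp [this]
    · exact mul_nonneg (by linarith) (by linarith)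
  have : (2 : ℤ) * (((X ×ˢ Xᶜ).filter (fun p => B p.1 p.2)).card : ℤ) ≤ r * (r + 1) := by
    rw [hcast]; nlinarith [key]
  exact_mod_cast this

theorem stmt18 (d k : ℕ) (hd : 1 ≤ d) (hk : 1 ≤ k)
    (A : (Fin k × Fin (2 * d + 1)) ⊕ Fin (2 * d + 3) →
         (Fin k × Fin (2 * d + 1)) ⊕ Fin (2 * d + 3) → Prop)
    [DecidableRel A]
    (hsmall : ∀ j : Fin k, ∀ u v : Fin (2 * d + 1),
      (A (.inl (j, u)) (.inl (j, v)) → u ≠ v) ∧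
      (u ≠ v → (A (.inl (j, u)) (.inl (j, v)) ↔ ¬ A (.inl (j, v)) (.inl (j, u)))))
    (hsmalldeg : ∀ j : Fin k, ∀ u : Fin (2 * d + 1),
      (Finset.univ.filter (fun v => A (.inl (j, u)) (.inl (j, v)))).card = d ∧
      (Finset.univ.filter (fun v => A (.inl (j, v)) (.inl (j, u)))).card = d)
    (hcross : ∀ j j' : Fin k, ∀ u v : Fin (2 * d + 1), j ≠ j' →
      ¬ A (.inl (j, u)) (.inl (j', v)))
    (hbig : ∀ u v : Fin (2 * d + 3),
      (A (.inr u) (.inr v) → u ≠ v) ∧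
      (u ≠ v → (A (.inr u) (.inr v) ↔ ¬ A (.inr v) (.inr u))))
    (hbigdeg : ∀ u : Fin (2 * d + 3),
      (Finset.univ.filter (fun v => A (.inr u) (.inr v))).card = d + 1 ∧
      (Finset.univ.filter (fun v => A (.inr v) (.inr u))).card = d + 1)
    (hto : ∀ x : Fin k × Fin (2 * d + 1), ∀ w : Fin (2 * d + 3),
      (A (.inl x) (.inr w) ↔ w = 0))
    (hfrom : ∀ w : Fin (2 * d + 3), ∀ x : Fin k × Fin (2 * d + 1), ¬ A (.inr w) (.inl x))
    (m : ℕ) (hm : m = k * (d + 1) * (2 * d + 1) + (d + 1) * (2 * d + 3)) :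
    (∀ V1 : Finset ((Fin k × Fin (2 * d + 1)) ⊕ Fin (2 * d + 3)),
      Sum.inr 0 ∈ V1 →
        (arcs A V1 V1ᶜ : ℚ) ≤ (k : ℚ) * (d * (d + 1)) / 2 + (d + 1) * (d + 2) / 2) ∧
    (∀ V1 : Finset ((Fin k × Fin (2 * d + 1)) ⊕ Fin (2 * d + 3)),
      min (arcs A V1 V1ᶜ : ℚ) (arcs A V1ᶜ V1 : ℚ)
        ≤ ((d : ℚ) / (2 * (2 * d + 1))) * m + (d + 1) ^ 2 / (2 * d + 1)) := by
  -- natural-number form of the key bound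
  have key1 : ∀ V1 : Finset ((Fin k × Fin (2 * d + 1)) ⊕ Fin (2 * d + 3)),
      Sum.inr 0 ∈ V1 →
      2 * arcs A V1 V1ᶜ ≤ k * (d * (d + 1)) + (d + 1) * (d + 2) := by
    intro V1 hv0
    classical
    set Xj : Fin k → Finset (Fin (2 * d + 1)) :=
      fun j => Finset.univ.filter (fun u => (Sum.inl (j, u) : (Fin k × Fin (2 * d + 1)) ⊕ Fin (2 * d + 3)) ∈ V1) with hXj
    set Y : Finset (Fin (2 * d + 3)) :=
      Finset.univ.filter (fun w => (Sum.inr w : (Fin k × Fin (2 * d + 1)) ⊕ Fin (2 * d + 3)) ∈ V1) with hY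
    set smallS : Fin k → Finset (Fin (2 * d + 1) × Fin (2 * d + 1)) :=
      fun j => ((Xj j) ×ˢ (Xj j)ᶜ).filter
        (fun p => A (.inl (j, p.1)) (.inl (j, p.2))) with hsS
    set bigS : Finset (Fin (2 * d + 3) × Fin (2 * d + 3)) :=
      (Y ×ˢ Yᶜ).filter (fun p => A (.inr p.1) (.inr p.2)) with hbS
    set F : Fin k ⊕ Unit → Finset ((((Fin k × Fin (2 * d + 1)) ⊕ Fin (2 * d + 3))) × (((Fin k × Fin (2 * d + 1)) ⊕ Fin (2 * d + 3)))) :=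
      Sum.elim
        (fun j => (smallS j).image
          (fun p => ((Sum.inl (j, p.1) : (Fin k × Fin (2 * d + 1)) ⊕ Fin (2 * d + 3)), (Sum.inl (j, p.2) : (Fin k × Fin (2 * d + 1)) ⊕ Fin (2 * d + 3)))))
        (fun _ => bigS.image (fun p => ((Sum.inr p.1 : (Fin k × Fin (2 * d + 1)) ⊕ Fin (2 * d + 3)), (Sum.inr p.2 : (Fin k × Fin (2 * d + 1)) ⊕ Fin (2 * d + 3))))) with hF
    have hsub : (V1 ×ˢ V1ᶜ).filter (fun p => A p.1 p.2) ⊆ Finset.univ.biUnion F := by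
      rintro ⟨x, y⟩ hp
      rw [Finset.mem_filter, Finset.mem_product] at hp
      obtain ⟨⟨hx, hy⟩, hA⟩ := hp
      dsimp only at hx hy hA
      rw [Finset.mem_compl] at hy
      rcases x with ⟨j, u⟩ | w
      · rcases y with ⟨j', v⟩ | w'
        · rcases eq_or_ne j j' with rfl | hne
          · refine Finset.mem_biUnion.2 ⟨Sum.inl j, Finset.mem_univ _, ?_⟩
            simp only [hF, Sum.elim_inl, Finset.mem_image]
            refine ⟨(u, v), ?_, rfl⟩
            simp only [hsS, Finset.mem_filter, Finset.mem_product, Finset.mem_compl,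
              hXj, Finset.mem_filter, Finset.mem_univ, true_and]
            exact ⟨⟨hx, hy⟩, hA⟩
          · exact absurd hA (hcross j j' u v hne)
        · exfalso
          have := (hto (j, u) w').1 hA
          subst this
          exact hy hv0
      · rcases y with x' | w'
        · exact absurd hA (hfrom w x')
        · refine Finset.mem_biUnion.2 ⟨Sum.inr (), Finset.mem_univ _, ?_⟩
          simp only [hF, Sum.elim_inr, Finset.mem_image]
          refine ⟨(w, w'), ?_, rfl⟩
          simp only [hbS, Finset.mem_filter, Finset.mem_product, Finset.mem_compl,
            hY, Finset.mem_filter, Finset.mem_univ, true_and]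
          exact ⟨⟨hx, hy⟩, hA⟩
    have hcard : arcs A V1 V1ᶜ ≤ ∑ j : Fin k, (smallS j).card + bigS.card := by
      calc arcs A V1 V1ᶜ ≤ (Finset.univ.biUnion F).card :=
            Finset.card_le_card hsub
        _ ≤ ∑ i : Fin k ⊕ Unit, (F i).card := Finset.card_biUnion_le
        _ = ∑ j : Fin k, (F (Sum.inl j)).card + ∑ _u : Unit, (F (Sum.inr _u)).card :=
            Fintype.sum_sum_type _
        _ ≤ ∑ j : Fin k, (smallS j).card + bigS.card := by
            gcongr with j _
            · exact Finset.card_image_le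
            · simpa [hF] using (Finset.card_image_le
                (s := bigS) (f := fun p => ((Sum.inr p.1 : (Fin k × Fin (2 * d + 1)) ⊕ Fin (2 * d + 3)), (Sum.inr p.2 : (Fin k × Fin (2 * d + 1)) ⊕ Fin (2 * d + 3)))))
    have hsmallb : ∀ j : Fin k, 2 * (smallS j).card ≤ d * (d + 1) := by
      intro j
      exact tourney_bound d (fun u v => A (.inl (j, u)) (.inl (j, v)))
        (fun u h => (hsmall j u u).1 h rfl)
        (fun u v h => (hsmall j u v).2 h)
        (fun u => (hsmalldeg j u).1) (Xj j)
    have hbigb : 2 * bigS.card ≤ (d + 1) * (d + 2) := by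
      exact tourney_bound (d + 1) (fun u v => A (.inr u) (.inr v))
        (fun u h => (hbig u u).1 h rfl)
        (fun u v h => (hbig u v).2 h)
        (fun u => (hbigdeg u).1) Y
    calc 2 * arcs A V1 V1ᶜ ≤ 2 * (∑ j : Fin k, (smallS j).card + bigS.card) := by omega
      _ = ∑ j : Fin k, 2 * (smallS j).card + 2 * bigS.card := by
          rw [mul_add, Finset.mul_sum]
      _ ≤ ∑ _j : Fin k, d * (d + 1) + (d + 1) * (d + 2) :=
          add_le_add (Finset.sum_le_sum fun j _ => hsmallb j) hbigb
      _ = k * (d * (d + 1)) + (d + 1) * (d + 2) := by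
          simp [Finset.sum_const, mul_comm]
  have keyQ : ∀ V1 : Finset ((Fin k × Fin (2 * d + 1)) ⊕ Fin (2 * d + 3)),
      Sum.inr 0 ∈ V1 →
      (arcs A V1 V1ᶜ : ℚ) ≤ (k : ℚ) * (d * (d + 1)) / 2 + (d + 1) * (d + 2) / 2 := by
    intro V1 hv0
    have h := key1 V1 hv0
    have h' : ((2 * arcs A V1 V1ᶜ : ℕ) : ℚ) ≤ ((k * (d * (d + 1)) + (d + 1) * (d + 2) : ℕ) : ℚ) :=
      Nat.cast_le.2 h
    push_cast at h'
    linarith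
  refine ⟨keyQ, ?_⟩
  intro V1
  have heq : (k : ℚ) * (d * (d + 1)) / 2 + (d + 1) * (d + 2) / 2
      = ((d : ℚ) / (2 * (2 * d + 1))) * m + (d + 1) ^ 2 / (2 * d + 1) := by
    have hdpos : (0 : ℚ) < 2 * (d : ℚ) + 1 := by positivity
    rw [hm]
    push_cast
    field_simp
    ring
  by_cases hv0 : (Sum.inr 0 : (Fin k × Fin (2 * d + 1)) ⊕ Fin (2 * d + 3)) ∈ V1
  · calc min (arcs A V1 V1ᶜ : ℚ) (arcs A V1ᶜ V1 : ℚ) ≤ (arcs A V1 V1ᶜ : ℚ) := min_le_left _ _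
      _ ≤ _ := keyQ V1 hv0
      _ = _ := heq
  · have hv0' : (Sum.inr 0 : (Fin k × Fin (2 * d + 1)) ⊕ Fin (2 * d + 3)) ∈ V1ᶜ :=
      Finset.mem_compl.2 hv0
    have := keyQ V1ᶜ hv0'
    rw [compl_compl] at this
    calc min (arcs A V1 V1ᶜ : ℚ) (arcs A V1ᶜ V1 : ℚ) ≤ (arcs A V1ᶜ V1 : ℚ) := min_le_right _ _
      _ ≤ _ := this
      _ = _ := heq
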